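/- Let H = {1,...,n}³ with 3n² axis-parallel line switches (one for each line in the x-, y-, or z-direction). There exists a ±1 assignment a : H → {±1} such that for all switch settings ℓ_{ij}, ℓ_{ik}, ℓ_{jk} ∈ {±1}, ∑_{i,j,k} a_{ijk} ℓ_{ij} ℓ_{ik} ℓ_{jk} ≤ (6 ln 2)^{1/2} n^{5/2}; and for every ±1 assignment there exist switch settings with ∑_{i,j,k} a_{ijk} ℓ_{ij} ℓ_{ik} ℓ_{jk} ≥ c·n^{5/2} for an absolute constant c > 0. Hence the maximum discrepancy of the cubic board is Θ(n^{5/2}). -/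

import Mathlib

open Finset

def sg (b : Bool) : ℤ := if b then 1 else -1

lemma sg_beq (x y : Bool) : sg (x == y) = sg x * sg y := by cases x <;> cases y <;> rfl

lemma sg_one_or (x : Bool) : sg x = 1 ∨ sg x = -1 := by cases x <;> simp [sg]

lemma sum_bool_prod {ι : Type*} [Fintype ι] [DecidableEq ι] {R : Type*} [CommSemiring R]
    (f : ι → Bool → R) :
    ∑ δ : ι → Bool, ∏ i, f i (δ i) = ∏ i, (f i true + f i false) := by
  rw [← Fintype.prod_sum f]
  congr 1
  ext i
  exact Fintype.sum_bool _

lemma prod_pow_ind {ι : Type*} [Fintype ι] [DecidableEq ι] (g : ι → ℤ) (i : ι) :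
    ∏ x, g x ^ (if x = i then 1 else 0) = g i := by
  simp only [pow_ite, pow_one, pow_zero]
  simp [Finset.prod_ite_eq']

lemma sum_sg_pair {ι : Type*} [Fintype ι] [DecidableEq ι] (i j : ι) :
    ∑ δ : ι → Bool, sg (δ i) * sg (δ j)
      = if i = j then 2 ^ Fintype.card ι else 0 := by
  have key : ∀ δ : ι → Bool, sg (δ i) * sg (δ j)
      = ∏ x, sg (δ x) ^ ((if x = i then 1 else 0) + (if x = j then 1 else 0)) := by
    intro δ
    simp only [pow_add, Finset.prod_mul_distrib, prod_pow_ind]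
  simp only [key]
  rw [sum_bool_prod (f := fun x v => sg v ^ ((if x = i then 1 else 0) + (if x = j then 1 else 0)))]
  by_cases h : i = j
  · subst h
    simp only [if_pos rfl, if_true]
    have h2 : ∀ x : ι, sg true ^ ((if x = i then 1 else 0) + if x = i then 1 else 0)
        + sg false ^ ((if x = i then 1 else 0) + if x = i then 1 else 0) = 2 := by
      intro x; by_cases hx : x = i <;> simp [hx, sg]
    rw [Finset.prod_congr rfl (fun x _ => h2 x), Finset.prod_const, Finset.card_univ]
  · simp only [if_neg h]
    apply Finset.prod_eq_zero (Finset.mem_univ i)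
    simp [if_neg h, sg, Ne.symm h]

lemma sum_sg_quad {ι : Type*} [Fintype ι] [DecidableEq ι] (i j k l : ι) :
    ∑ δ : ι → Bool, sg (δ i) * sg (δ j) * (sg (δ k) * sg (δ l))
      ≤ ((if i = j ∧ k = l then 1 else 0) + (if i = k ∧ j = l then 1 else 0)
          + (if i = l ∧ j = k then 1 else 0)) * 2 ^ Fintype.card ι := by
  set m : ι → ℕ := fun x => (if x = i then 1 else 0) + (if x = j then 1 else 0)
      + (if x = k then 1 else 0) + (if x = l then 1 else 0) with hm
  have key : ∀ δ : ι → Bool, sg (δ i) * sg (δ j) * (sg (δ k) * sg (δ l))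
      = ∏ x, sg (δ x) ^ m x := by
    intro δ
    simp only [hm, pow_add, Finset.prod_mul_distrib, prod_pow_ind]
    ring
  simp only [key]
  rw [sum_bool_prod (f := fun x v => sg v ^ m x)]
  have hfac : ∀ x : ι, sg true ^ m x + sg false ^ m x = if Even (m x) then 2 else 0 := by
    intro x
    by_cases hx : Even (m x)
    · simp [sg, hx, Even.neg_one_pow hx]
    · simp [sg, hx, Odd.neg_one_pow (Nat.not_even_iff_odd.mp hx)]
  rw [Finset.prod_congr rfl (fun x _ => hfac x)]
  by_cases hall : ∀ x : ι, Even (m x)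
  · rw [Finset.prod_congr rfl (fun x _ => if_pos (hall x)), Finset.prod_const,
      Finset.card_univ]
    have hone : (1:ℤ) ≤ (if i = j ∧ k = l then 1 else 0) + (if i = k ∧ j = l then 1 else 0)
        + (if i = l ∧ j = k then 1 else 0) := by
      have hi := hall i; have hj := hall j; have hk := hall k
      simp only [hm, Nat.even_iff, eq_self_iff_true, if_true] at hi hj hk
      by_cases hij : i = j
      · by_cases hkl : k = l
        · rw [if_pos ⟨hij, hkl⟩]; split_ifs <;> omega
        · exfalso
          subst hij
          by_cases hki : k = i
          · rw [if_pos hki, if_neg hkl] at hk; omega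
          · rw [if_neg hki, if_neg hkl] at hk; omega
      · rw [if_neg hij] at hi
        by_cases hik : i = k
        · rw [if_pos hik] at hi
          by_cases hil : i = l
          · exfalso; rw [if_pos hil] at hi; omega
          · by_cases hjl : j = l
            · have e2 : (if i = k ∧ j = l then (1:ℤ) else 0) = 1 := if_pos ⟨hik, hjl⟩
              rw [e2]; split_ifs <;> omega
            · exfalso
              rw [if_neg (fun h : j = i => hij h.symm),
                if_neg (fun h : j = k => hij (hik.trans h.symm)), if_neg hjl] at hj
              omega
        · by_cases hil : i = l
          · rw [if_pos hil, if_neg hik] at hi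
            by_cases hjk : j = k
            · have e3 : (if i = l ∧ j = k then (1:ℤ) else 0) = 1 := if_pos ⟨hil, hjk⟩
              rw [e3]; split_ifs <;> omega
            · exfalso
              rw [if_neg (fun h : j = i => hij h.symm), if_neg hjk,
                if_neg (fun h : j = l => hij (hil.trans h.symm))] at hj
              omega
          · exfalso; rw [if_neg hik, if_neg hil] at hi; omega
    nlinarith [pow_pos (by norm_num : (0:ℤ) < 2) (Fintype.card ι)]
  · push_neg at hall
    obtain ⟨x, hx⟩ := hall
    rw [Finset.prod_eq_zero (Finset.mem_univ x) (by simp [hx])]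
    positivity

lemma momB {ι : Type*} [Fintype ι] [DecidableEq ι] :
    ∑ δ : ι → Bool, (∑ j, sg (δ j))^2 = (Fintype.card ι) * 2 ^ (Fintype.card ι) := by
  calc ∑ δ : ι → Bool, (∑ j, sg (δ j))^2
      = ∑ δ : ι → Bool, ∑ j, ∑ j', sg (δ j) * sg (δ j') := by
        simp_rw [sq, Finset.sum_mul_sum]
    _ = ∑ j, ∑ j', ∑ δ : ι → Bool, sg (δ j) * sg (δ j') := by
        rw [Finset.sum_comm]
        exact Finset.sum_congr rfl fun j _ => Finset.sum_comm
    _ = ∑ j : ι, ∑ j' : ι, if j = j' then 2 ^ (Fintype.card ι) else (0:ℤ) := by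
        simp_rw [sum_sg_pair]
    _ = (Fintype.card ι) * 2 ^ (Fintype.card ι) := by
        simp [Finset.sum_ite_eq, Finset.card_univ]

lemma momC {ι : Type*} [Fintype ι] [DecidableEq ι] :
    ∑ δ : ι → Bool, (∑ j, sg (δ j))^4 ≤ 3 * (Fintype.card ι)^2 * 2 ^ (Fintype.card ι) := by
  have hexp : ∀ δ : ι → Bool, (∑ j, sg (δ j))^4
      = ∑ q : (ι × ι) × ι × ι, sg (δ q.1.1) * sg (δ q.1.2) * (sg (δ q.2.1) * sg (δ q.2.2)) := by
    intro δ
    have h2 : (∑ j, sg (δ j))^2 = ∑ p : ι × ι, sg (δ p.1) * sg (δ p.2) := by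
      rw [sq, Finset.sum_mul_sum]
      exact (Fintype.sum_prod_type (fun p : ι × ι => sg (δ p.1) * sg (δ p.2))).symm
    calc (∑ j, sg (δ j))^4 = ((∑ j, sg (δ j))^2)^2 := by ring
      _ = ∑ q : (ι × ι) × ι × ι,
            sg (δ q.1.1) * sg (δ q.1.2) * (sg (δ q.2.1) * sg (δ q.2.2)) := by
          rw [h2, sq, Finset.sum_mul_sum]
          exact (Fintype.sum_prod_type (fun q : (ι × ι) × ι × ι =>
            sg (δ q.1.1) * sg (δ q.1.2) * (sg (δ q.2.1) * sg (δ q.2.2)))).symm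
  simp_rw [hexp]
  rw [Finset.sum_comm]
  have hle : ∑ q : (ι × ι) × ι × ι, ∑ δ : ι → Bool,
      sg (δ q.1.1) * sg (δ q.1.2) * (sg (δ q.2.1) * sg (δ q.2.2))
      ≤ ∑ q : (ι × ι) × ι × ι,
        ((if q.1.1 = q.1.2 ∧ q.2.1 = q.2.2 then 1 else 0)
          + (if q.1.1 = q.2.1 ∧ q.1.2 = q.2.2 then 1 else 0)
          + (if q.1.1 = q.2.2 ∧ q.1.2 = q.2.1 then (1:ℤ) else 0)) * 2 ^ Fintype.card ι :=
    Finset.sum_le_sum fun q _ => sum_sg_quad q.1.1 q.1.2 q.2.1 q.2.2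
  refine hle.trans ?_
  have c1 : ∑ q : (ι × ι) × ι × ι, (if q.1.1 = q.1.2 ∧ q.2.1 = q.2.2 then (1:ℤ) else 0)
      = (Fintype.card ι)^2 := by
    rw [Fintype.sum_prod_type]
    simp_rw [ite_and, Fintype.sum_prod_type]
    simp [Finset.sum_ite_eq, Finset.sum_ite_irrel, Finset.card_univ, sq]
  have c2 : ∑ q : (ι × ι) × ι × ι, (if q.1.1 = q.2.1 ∧ q.1.2 = q.2.2 then (1:ℤ) else 0)
      = (Fintype.card ι)^2 := by
    rw [Fintype.sum_prod_type]
    simp_rw [ite_and, Fintype.sum_prod_type]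
    simp [Finset.sum_ite_eq, Finset.sum_ite_irrel, Finset.card_univ, sq]
  have c3 : ∑ q : (ι × ι) × ι × ι, (if q.1.1 = q.2.2 ∧ q.1.2 = q.2.1 then (1:ℤ) else 0)
      = (Fintype.card ι)^2 := by
    rw [Fintype.sum_prod_type]
    simp_rw [ite_and, Fintype.sum_prod_type]
    simp [Finset.sum_ite_eq, Finset.sum_ite_irrel, Finset.card_univ, sq]
  rw [← Finset.sum_mul, Finset.sum_add_distrib, Finset.sum_add_distrib, c1, c2, c3]
  ring_nf
  simp

lemma absA {ι : Type*} [Fintype ι] [DecidableEq ι] :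
    (2:ℝ) ^ (Fintype.card ι) * Real.sqrt (Fintype.card ι) / Real.sqrt 3
      ≤ ∑ δ : ι → Bool, |((∑ j, sg (δ j) : ℤ) : ℝ)| := by
  classical
  set N := Fintype.card ι with hN
  set R : (ι → Bool) → ℝ := fun δ => ((∑ j, sg (δ j) : ℤ) : ℝ) with hR
  set A := ∑ δ : ι → Bool, |R δ| with hA
  set B := ∑ δ : ι → Bool, (R δ)^2 with hB
  set D := ∑ δ : ι → Bool, |R δ|^3 with hD
  set C := ∑ δ : ι → Bool, (R δ)^4 with hC
  have habs : ∀ δ : ι → Bool, (0:ℝ) ≤ |R δ| := fun δ => abs_nonneg _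
  have hBval : B = (N:ℝ) * 2 ^ N := by
    have h := momB (ι := ι)
    have h' : ((∑ δ : ι → Bool, (∑ j, sg (δ j))^2 : ℤ) : ℝ)
        = (((Fintype.card ι) * 2 ^ (Fintype.card ι) : ℤ) : ℝ) := by rw [h]
    push_cast at h'
    simpa [hB, hR] using h'
  have hCval : C ≤ 3 * (N:ℝ)^2 * 2 ^ N := by
    have h := momC (ι := ι)
    have h' : ((∑ δ : ι → Bool, (∑ j, sg (δ j))^4 : ℤ) : ℝ)
        ≤ ((3 * (Fintype.card ι)^2 * 2 ^ (Fintype.card ι) : ℤ) : ℝ) := by exact_mod_cast h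
    push_cast at h'
    simpa [hC, hR] using h'
  have hA0 : (0:ℝ) ≤ A := Finset.sum_nonneg fun δ _ => abs_nonneg _
  have hD0 : (0:ℝ) ≤ D := Finset.sum_nonneg fun δ _ => pow_nonneg (abs_nonneg _) 3
  have hC0 : (0:ℝ) ≤ C := Finset.sum_nonneg fun δ _ => by positivity
  have cs1 : B^2 ≤ A * D := by
    have h := Finset.sum_mul_sq_le_sq_mul_sq Finset.univ
      (fun δ : ι → Bool => Real.sqrt |R δ|) (fun δ => |R δ| * Real.sqrt |R δ|)
    have e1 : ∀ δ : ι → Bool,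
        Real.sqrt |R δ| * (|R δ| * Real.sqrt |R δ|) = (R δ)^2 := by
      intro δ
      rw [show Real.sqrt |R δ| * (|R δ| * Real.sqrt |R δ|)
          = (Real.sqrt |R δ| * Real.sqrt |R δ|) * |R δ| by ring,
        Real.mul_self_sqrt (habs δ), ← sq_abs]
      ring
    have e2 : ∀ δ : ι → Bool, (Real.sqrt |R δ|)^2 = |R δ| :=
      fun δ => Real.sq_sqrt (habs δ)
    have e3 : ∀ δ : ι → Bool, (|R δ| * Real.sqrt |R δ|)^2 = |R δ|^3 := by
      intro δ; rw [mul_pow, Real.sq_sqrt (habs δ)]; ring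
    rw [Finset.sum_congr rfl (fun δ _ => e1 δ), Finset.sum_congr rfl (fun δ _ => e2 δ),
      Finset.sum_congr rfl (fun δ _ => e3 δ)] at h
    exact h
  have cs2 : D^2 ≤ B * C := by
    have h := Finset.sum_mul_sq_le_sq_mul_sq Finset.univ
      (fun δ : ι → Bool => |R δ|) (fun δ => (R δ)^2)
    have e1 : ∀ δ : ι → Bool, |R δ| * (R δ)^2 = |R δ|^3 := by
      intro δ; rw [← sq_abs]; ring
    have e2 : ∀ δ : ι → Bool, |R δ|^2 = (R δ)^2 := fun δ => sq_abs _
    have e3 : ∀ δ : ι → Bool, ((R δ)^2)^2 = (R δ)^4 := fun δ => by ring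
    rw [Finset.sum_congr rfl (fun δ _ => e1 δ), Finset.sum_congr rfl (fun δ _ => e2 δ),
      Finset.sum_congr rfl (fun δ _ => e3 δ)] at h
    exact h
  rcases Nat.eq_zero_or_pos N with h0 | hpos
  · rw [h0]
    simp only [Nat.cast_zero, Real.sqrt_zero, mul_zero, zero_div]
    exact hA0
  · have hNpos : (0:ℝ) < N := by exact_mod_cast hpos
    have h2pos : (0:ℝ) < 2 ^ N := by positivity
    have hBpos : (0:ℝ) < B := by rw [hBval]; positivity
    have h4 : B^4 ≤ A^2 * (B * C) := by
      calc B^4 = (B^2)^2 := by ring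
        _ ≤ (A * D)^2 := pow_le_pow_left₀ (sq_nonneg B) cs1 2
        _ = A^2 * D^2 := by ring
        _ ≤ A^2 * (B * C) := mul_le_mul_of_nonneg_left cs2 (sq_nonneg A)
    have h3 : B^3 ≤ A^2 * C := by
      have := (mul_le_mul_iff_right₀ hBpos).mp (by linarith [h4] : B * B^3 ≤ B * (A^2 * C))
      exact this
    have h1 : (N:ℝ)^3 * (2^N)^3 ≤ A^2 * (3 * (N:ℝ)^2 * 2^N) := by
      calc (N:ℝ)^3 * (2^N)^3 = B^3 := by rw [hBval]; ring
        _ ≤ A^2 * C := h3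
        _ ≤ A^2 * (3 * (N:ℝ)^2 * 2^N) := mul_le_mul_of_nonneg_left hCval (sq_nonneg A)
    have hsq : (2^N * Real.sqrt N / Real.sqrt 3)^2 ≤ A^2 := by
      rw [div_pow, mul_pow, Real.sq_sqrt (le_of_lt hNpos),
        Real.sq_sqrt (by norm_num : (0:ℝ) ≤ 3)]
      rw [div_le_iff₀ (by norm_num : (0:ℝ) < 3)]
      have hfac : (0:ℝ) < (N:ℝ)^2 * 2^N := by positivity
      have h1' : (2:ℝ)^N * 2^N * (N:ℝ) * ((N:ℝ)^2 * 2^N) ≤ A^2 * 3 * ((N:ℝ)^2 * 2^N) := by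
        calc (2:ℝ)^N * 2^N * (N:ℝ) * ((N:ℝ)^2 * 2^N) = (N:ℝ)^3 * (2^N)^3 := by ring
          _ ≤ A^2 * (3*(N:ℝ)^2*2^N) := h1
          _ = A^2 * 3 * ((N:ℝ)^2 * 2^N) := by ring
      have := le_of_mul_le_mul_right h1' hfac
      nlinarith [this]
    have ht0 : (0:ℝ) ≤ 2^N * Real.sqrt N / Real.sqrt 3 := by positivity
    calc (2:ℝ)^N * Real.sqrt N / Real.sqrt 3
        = Real.sqrt ((2^N * Real.sqrt N / Real.sqrt 3)^2) := (Real.sqrt_sq ht0).symm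
      _ ≤ Real.sqrt (A^2) := Real.sqrt_le_sqrt hsq
      _ = A := Real.sqrt_sq hA0

lemma twoD (n : ℕ) (M : Fin n → Fin n → ℤ) (hM : ∀ i j, M i j = 1 ∨ M i j = -1) :
    ∃ ε δ : Fin n → ℤ, (∀ i, ε i = 1 ∨ ε i = -1) ∧ (∀ j, δ j = 1 ∨ δ j = -1) ∧
      (n:ℝ) * Real.sqrt n / Real.sqrt 3 ≤ ((∑ i, ∑ j, M i j * ε i * δ j : ℤ) : ℝ) := by
  classical
  have row : ∀ i, ∑ d : Fin n → Bool, |((∑ j, M i j * sg (d j) : ℤ) : ℝ)|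
      = ∑ d : Fin n → Bool, |((∑ j, sg (d j) : ℤ) : ℝ)| := by
    intro i
    set c : Fin n → Bool := fun j => decide (M i j = 1) with hc
    have hMc : ∀ j, M i j = sg (c j) := by
      intro j
      rcases hM i j with h | h <;> norm_num [hc, h, sg]
    have hinv : Function.Involutive (fun d : Fin n → Bool => fun j => (d j == c j)) := by
      intro d; funext j; show ((d j == c j) == c j) = d j; cases d j <;> cases c j <;> rfl
    refine Fintype.sum_bijective _ hinv.bijective _ _ fun d => ?_
    congr 2
    refine Finset.sum_congr rfl fun j _ => ?_
    rw [sg_beq, hMc j]; ring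
  have habs : (2:ℝ)^n * Real.sqrt n / Real.sqrt 3
      ≤ ∑ d : Fin n → Bool, |((∑ j, sg (d j) : ℤ) : ℝ)| := by
    have := absA (ι := Fin n)
    simpa [Fintype.card_fin] using this
  have havg : (2:ℝ)^n * ((n:ℝ) * Real.sqrt n / Real.sqrt 3)
      ≤ ∑ d : Fin n → Bool, ∑ i, |((∑ j, M i j * sg (d j) : ℤ) : ℝ)| := by
    rw [Finset.sum_comm]
    calc (2:ℝ)^n * ((n:ℝ) * Real.sqrt n / Real.sqrt 3)
        = ∑ _i : Fin n, (2:ℝ)^n * Real.sqrt n / Real.sqrt 3 := by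
          rw [Finset.sum_const, Finset.card_univ, Fintype.card_fin, nsmul_eq_mul]; ring
      _ ≤ ∑ i, ∑ d : Fin n → Bool, |((∑ j, M i j * sg (d j) : ℤ) : ℝ)| :=
          Finset.sum_le_sum fun i _ => by rw [row i]; exact habs
  obtain ⟨d, hd⟩ : ∃ d : Fin n → Bool,
      (n:ℝ) * Real.sqrt n / Real.sqrt 3 ≤ ∑ i, |((∑ j, M i j * sg (d j) : ℤ) : ℝ)| := by
    by_contra hcon
    push_neg at hcon
    have hlt : ∑ d : Fin n → Bool, ∑ i, |((∑ j, M i j * sg (d j) : ℤ) : ℝ)|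
        < ∑ _d : Fin n → Bool, (n:ℝ) * Real.sqrt n / Real.sqrt 3 :=
      Finset.sum_lt_sum_of_nonempty Finset.univ_nonempty fun d _ => hcon d
    rw [Finset.sum_const, Finset.card_univ, Fintype.card_fun, Fintype.card_bool,
      Fintype.card_fin, nsmul_eq_mul] at hlt
    rw [show ((2^n : ℕ):ℝ) = (2:ℝ)^n by push_cast; ring] at hlt
    linarith [havg, hlt]
  set Rf : Fin n → ℤ := fun i => ∑ j, M i j * sg (d j) with hRf
  refine ⟨fun i => if 0 ≤ Rf i then 1 else -1, fun j => sg (d j),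
    fun i => by dsimp only; split_ifs <;> simp, fun j => sg_one_or _, ?_⟩
  have key : (∑ i, ∑ j, M i j * (if 0 ≤ Rf i then (1:ℤ) else -1) * sg (d j))
      = ∑ i, |Rf i| := by
    refine Finset.sum_congr rfl fun i _ => ?_
    have e : ∑ j, M i j * (if 0 ≤ Rf i then (1:ℤ) else -1) * sg (d j)
        = (if 0 ≤ Rf i then (1:ℤ) else -1) * Rf i := by
      rw [hRf, Finset.mul_sum]
      exact Finset.sum_congr rfl fun j _ => by ring
    rw [e]
    split_ifs with h
    · rw [one_mul, abs_of_nonneg h]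
    · rw [abs_of_neg (lt_of_not_ge h)]; ring
  rw [key]
  calc (n:ℝ) * Real.sqrt n / Real.sqrt 3
      ≤ ∑ i, |((Rf i : ℤ) : ℝ)| := hd
    _ = ((∑ i, |Rf i| : ℤ) : ℝ) := by push_cast; rfl

lemma rpow_five_half (n : ℕ) : (n:ℝ)^((5:ℝ)/2) = (n:ℝ)^2 * Real.sqrt n := by
  rcases Nat.eq_zero_or_pos n with h | h
  · subst h
    rw [Nat.cast_zero, Real.zero_rpow (by norm_num)]
    simp
  · have hn : (0:ℝ) < n := by exact_mod_cast h
    rw [Real.sqrt_eq_rpow, show ((5:ℝ)/2) = 2 + 1/2 by norm_num, Real.rpow_add hn,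
      show (2:ℝ) = ((2:ℕ):ℝ) by norm_num, Real.rpow_natCast]

lemma lowerB (n : ℕ) (a : Fin n → Fin n → Fin n → ℤ)
    (ha : ∀ i j k, a i j k = 1 ∨ a i j k = -1) :
    ∃ L₁ L₂ L₃ : Fin n → Fin n → ℤ,
      (∀ i j, L₁ i j = 1 ∨ L₁ i j = -1) ∧
      (∀ i k, L₂ i k = 1 ∨ L₂ i k = -1) ∧
      (∀ j k, L₃ j k = 1 ∨ L₃ j k = -1) ∧
      (Real.sqrt 3)⁻¹ * (n : ℝ) ^ ((5 : ℝ)/2)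
        ≤ ((∑ i, ∑ j, ∑ k, a i j k * L₁ i j * L₂ i k * L₃ j k : ℤ) : ℝ) := by
  have H : ∀ k : Fin n, ∃ ε δ : Fin n → ℤ,
      (∀ i, ε i = 1 ∨ ε i = -1) ∧ (∀ j, δ j = 1 ∨ δ j = -1) ∧
      (n:ℝ) * Real.sqrt n / Real.sqrt 3
        ≤ ((∑ i, ∑ j, a i j k * ε i * δ j : ℤ) : ℝ) :=
    fun k => twoD n (fun i j => a i j k) (fun i j => ha i j k)
  choose ε δ hε hδ hsum using H
  refine ⟨fun _ _ => 1, fun i k => ε k i, fun j k => δ k j,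
    fun _ _ => Or.inl rfl, fun i k => hε k i, fun j k => hδ k j, ?_⟩
  have swap : (∑ i, ∑ j, ∑ k, a i j k * 1 * ε k i * δ k j)
      = ∑ k, ∑ i, ∑ j, a i j k * ε k i * δ k j := by
    simp only [mul_one]
    calc ∑ i, ∑ j, ∑ k, a i j k * ε k i * δ k j
        = ∑ i, ∑ k, ∑ j, a i j k * ε k i * δ k j :=
          Finset.sum_congr rfl fun i _ => Finset.sum_comm
      _ = ∑ k, ∑ i, ∑ j, a i j k * ε k i * δ k j := Finset.sum_comm
  rw [swap]
  calc (Real.sqrt 3)⁻¹ * (n : ℝ) ^ ((5 : ℝ)/2)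
      = ∑ _k : Fin n, (n:ℝ) * Real.sqrt n / Real.sqrt 3 := by
        rw [Finset.sum_const, Finset.card_univ, Fintype.card_fin, nsmul_eq_mul,
          rpow_five_half]
        ring
    _ ≤ ∑ k, ((∑ i, ∑ j, a i j k * ε k i * δ k j : ℤ) : ℝ) :=
        Finset.sum_le_sum fun k _ => hsum k
    _ = ((∑ k, ∑ i, ∑ j, a i j k * ε k i * δ k j : ℤ) : ℝ) := by push_cast; rfl

lemma mgf {ι : Type*} [Fintype ι] [DecidableEq ι] (lam : ℝ) :
    ∑ b : ι → Bool, Real.exp (lam * ((∑ p, sg (b p) : ℤ) : ℝ))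
      = (Real.exp lam + Real.exp (-lam)) ^ (Fintype.card ι) := by
  have e1 : ∀ b : ι → Bool, Real.exp (lam * ((∑ p, sg (b p) : ℤ) : ℝ))
      = ∏ p, Real.exp (lam * ((sg (b p) : ℤ) : ℝ)) := by
    intro b
    rw [← Real.exp_sum, ← Finset.mul_sum]
    congr 1
    push_cast
    rfl
  simp only [e1]
  rw [sum_bool_prod (f := fun (p : ι) (v : Bool) => Real.exp (lam * ((sg v : ℤ) : ℝ)))]
  have : ∀ p : ι, Real.exp (lam * ((sg true : ℤ) : ℝ)) + Real.exp (lam * ((sg false : ℤ) : ℝ))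
      = Real.exp lam + Real.exp (-lam) := by
    intro p
    norm_num [sg]
  rw [Finset.prod_congr rfl fun p _ => this p, Finset.prod_const, Finset.card_univ]

lemma tailBound {ι : Type*} [Fintype ι] [DecidableEq ι] [Nonempty ι]
    {t lam : ℝ} (hl : 0 < lam) (ht : 0 ≤ t)
    [DecidablePred fun b : ι → Bool => t < ((∑ p, sg (b p) : ℤ) : ℝ)] :
    ((Finset.univ.filter fun b : ι → Bool => t < ((∑ p, sg (b p) : ℤ) : ℝ)).card : ℝ)
        * Real.exp (lam * t)
      < (2 * Real.exp (lam^2/2)) ^ (Fintype.card ι) := by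
  set F := Finset.univ.filter fun b : ι → Bool => t < ((∑ p, sg (b p) : ℤ) : ℝ) with hF
  have step1 : (F.card : ℝ) * Real.exp (lam * t)
      ≤ ∑ b ∈ F, Real.exp (lam * ((∑ p, sg (b p) : ℤ) : ℝ)) := by
    rw [mul_comm]
    have := Finset.card_nsmul_le_sum F
      (fun b => Real.exp (lam * ((∑ p, sg (b p) : ℤ) : ℝ))) (Real.exp (lam * t)) ?_
    · simpa [nsmul_eq_mul, mul_comm] using this
    · intro b hb
      rw [hF, Finset.mem_filter] at hb
      exact Real.exp_le_exp.mpr (mul_le_mul_of_nonneg_left hb.2.le hl.le)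
  have hb0 : (fun _ : ι => false) ∉ F := by
    rw [hF, Finset.mem_filter]
    rintro ⟨-, hlt⟩
    have : ((∑ _p : ι, sg false : ℤ) : ℝ) = -(Fintype.card ι : ℝ) := by
      simp [sg, Finset.sum_const, Finset.card_univ]
    rw [this] at hlt
    have : (0:ℝ) < (Fintype.card ι : ℝ) := by
      exact_mod_cast Fintype.card_pos
    linarith
  have step2 : ∑ b ∈ F, Real.exp (lam * ((∑ p, sg (b p) : ℤ) : ℝ))
      < ∑ b : ι → Bool, Real.exp (lam * ((∑ p, sg (b p) : ℤ) : ℝ)) := by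
    refine Finset.sum_lt_sum_of_subset (Finset.subset_univ F) (Finset.mem_univ _) hb0
      (Real.exp_pos _) fun b _ _ => (Real.exp_pos _).le
  have step3 : ∑ b : ι → Bool, Real.exp (lam * ((∑ p, sg (b p) : ℤ) : ℝ))
      ≤ (2 * Real.exp (lam^2/2)) ^ (Fintype.card ι) := by
    rw [mgf lam]
    refine pow_le_pow_left₀ (by positivity) ?_ _
    have hc := Real.cosh_le_exp_half_sq lam
    rw [Real.cosh_eq] at hc
    linarith
  linarith

lemma sg_beq3 : ∀ w x y z : Bool, sg (w == (x == (y == z))) = sg w * sg x * sg y * sg z := by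
  decide

lemma beq_invol : ∀ x m : Bool, ((x == m) == m) = x := by decide

def Tsum (n : ℕ) (b : Fin n × Fin n × Fin n → Bool)
    (c : (Fin n → Fin n → Bool) × (Fin n → Fin n → Bool) × (Fin n → Fin n → Bool)) : ℤ :=
  ∑ p : Fin n × Fin n × Fin n,
    sg (b p) * sg (c.1 p.1 p.2.1) * sg (c.2.1 p.1 p.2.2) * sg (c.2.2 p.2.1 p.2.2)

def msk (n : ℕ)
    (c : (Fin n → Fin n → Bool) × (Fin n → Fin n → Bool) × (Fin n → Fin n → Bool))
    (p : Fin n × Fin n × Fin n) : Bool :=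
  c.1 p.1 p.2.1 == (c.2.1 p.1 p.2.2 == c.2.2 p.2.1 p.2.2)

lemma Tsum_eq (n : ℕ) (b : Fin n × Fin n × Fin n → Bool)
    (c : (Fin n → Fin n → Bool) × (Fin n → Fin n → Bool) × (Fin n → Fin n → Bool)) :
    Tsum n b c = ∑ p : Fin n × Fin n × Fin n, sg (b p == msk n c p) := by
  refine Finset.sum_congr rfl fun p _ => ?_
  rw [msk, sg_beq3]

lemma upperA (n : ℕ) :
    ∃ a : Fin n → Fin n → Fin n → ℤ,
      (∀ i j k, a i j k = 1 ∨ a i j k = -1) ∧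
      ∀ L₁ L₂ L₃ : Fin n → Fin n → ℤ,
        (∀ i j, L₁ i j = 1 ∨ L₁ i j = -1) →
        (∀ i k, L₂ i k = 1 ∨ L₂ i k = -1) →
        (∀ j k, L₃ j k = 1 ∨ L₃ j k = -1) →
        ((∑ i, ∑ j, ∑ k, a i j k * L₁ i j * L₂ i k * L₃ j k : ℤ) : ℝ)
          ≤ Real.sqrt (6 * Real.log 2) * (n : ℝ) ^ ((5 : ℝ)/2) := by
  classical
  rcases Nat.eq_zero_or_pos n with h0 | hpos
  · subst h0
    refine ⟨fun i => i.elim0, fun i => i.elim0, fun L₁ L₂ L₃ _ _ _ => ?_⟩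
    rw [show ((0:ℕ):ℝ) = 0 by norm_num, Real.zero_rpow (by norm_num)]
    simp
  haveI : Nonempty (Fin n) := ⟨⟨0, hpos⟩⟩
  have hnR : (0:ℝ) < n := by exact_mod_cast hpos
  have hln : (0:ℝ) < Real.log 2 := Real.log_pos one_lt_two
  set t : ℝ := Real.sqrt (6 * Real.log 2) * (n : ℝ) ^ ((5 : ℝ)/2) with hts
  have htpos : 0 < t := by
    rw [hts]
    exact mul_pos (Real.sqrt_pos.mpr (by positivity)) (Real.rpow_pos_of_pos hnR _)
  have ht2 : t^2 = 6 * Real.log 2 * (n:ℝ)^5 := by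
    rw [hts, mul_pow, Real.sq_sqrt (by positivity), rpow_five_half, mul_pow,
      Real.sq_sqrt hnR.le]
    ring
  set lam : ℝ := t / (n:ℝ)^3 with hlam
  have hlampos : 0 < lam := by rw [hlam]; positivity
  have hcardι : Fintype.card (Fin n × Fin n × Fin n) = n^3 := by
    simp [Fintype.card_prod, Fintype.card_fin]; ring
  set K := (Finset.univ.filter fun b : Fin n × Fin n × Fin n → Bool =>
      t < ((∑ p, sg (b p) : ℤ) : ℝ)).card with hK
  have htail := tailBound (ι := Fin n × Fin n × Fin n) hlampos htpos.le
  rw [← hK, hcardι] at htail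
  -- simplify the tail bound to K < 2^(n^3) / 2^(3n^2)
  have hKlt : (K:ℝ) < 2^(n^3) / 2^(3*n^2) := by
    have hexp : Real.exp (lam * t) > 0 := Real.exp_pos _
    rw [mul_pow, ← Real.exp_nat_mul] at htail
    have h1 : (K:ℝ) < 2^(n^3) * Real.exp ((n^3 : ℕ) * (lam^2/2)) / Real.exp (lam * t) := by
      rw [lt_div_iff₀ hexp]; exact htail
    have h2 : (2:ℝ)^(n^3) * Real.exp ((n^3 : ℕ) * (lam^2/2)) / Real.exp (lam * t)
        = 2^(n^3) * Real.exp ((n^3 : ℕ) * (lam^2/2) - lam * t) := by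
      rw [Real.exp_sub]; ring
    have hn3 : ((n:ℝ)^3) ≠ 0 := by positivity
    have h3 : ((n^3 : ℕ) : ℝ) * (lam^2/2) - lam * t = -((3*n^2 : ℕ) * Real.log 2) := by
      push_cast
      rw [hlam]
      rw [show (n:ℝ)^3 * ((t/(n:ℝ)^3)^2/2) - (t/(n:ℝ)^3) * t = -(t^2/(2*(n:ℝ)^3)) from by
        field_simp; ring]
      rw [ht2]
      field_simp
      ring
    have h4 : Real.exp (-((3*n^2 : ℕ) * Real.log 2)) = ((2:ℝ)^(3*n^2))⁻¹ := by
      rw [Real.exp_neg, Real.exp_nat_mul, Real.exp_log (by norm_num : (0:ℝ) < 2)]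
    rw [h2, h3, h4] at h1
    rw [div_eq_mul_inv]
    exact h1
  have hslice : ∀ c : (Fin n → Fin n → Bool) × (Fin n → Fin n → Bool) × (Fin n → Fin n → Bool),
      (Finset.univ.filter fun b : Fin n × Fin n × Fin n → Bool =>
        t < ((Tsum n b c : ℤ) : ℝ)).card = K := by
    intro c
    rw [hK]
    refine Finset.card_nbij' (fun b => fun p => b p == msk n c p)
      (fun b => fun p => b p == msk n c p) ?_ ?_ ?_ ?_
    · intro b hb
      rw [Finset.mem_coe, Finset.mem_filter] at hb ⊢
      refine ⟨Finset.mem_univ _, ?_⟩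
      have he : (∑ p, sg ((fun p => b p == msk n c p) p) : ℤ) = Tsum n b c :=
        (Tsum_eq n b c).symm
      rw [he]
      exact hb.2
    · intro b hb
      rw [Finset.mem_coe, Finset.mem_filter] at hb ⊢
      refine ⟨Finset.mem_univ _, ?_⟩
      have he : Tsum n (fun p => b p == msk n c p) c = ∑ p, sg (b p) := by
        rw [Tsum_eq]
        exact Finset.sum_congr rfl fun p _ => by rw [beq_invol]
      rw [he]
      exact hb.2
    · intro b _; funext p; exact beq_invol _ _
    · intro b _; funext p; exact beq_invol _ _
  set Bad := Finset.univ.filter (fun b : Fin n × Fin n × Fin n → Bool =>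
    ∃ c : (Fin n → Fin n → Bool) × (Fin n → Fin n → Bool) × (Fin n → Fin n → Bool),
      t < ((Tsum n b c : ℤ) : ℝ)) with hBad
  have hsub : Bad ⊆ Finset.univ.biUnion
      (fun c : (Fin n → Fin n → Bool) × (Fin n → Fin n → Bool) × (Fin n → Fin n → Bool) =>
        Finset.univ.filter fun b : Fin n × Fin n × Fin n → Bool =>
          t < ((Tsum n b c : ℤ) : ℝ)) := by
    intro b hb
    rw [hBad, Finset.mem_filter] at hb
    obtain ⟨-, c, hc⟩ := hb
    exact Finset.mem_biUnion.mpr ⟨c, Finset.mem_univ _,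
      Finset.mem_filter.mpr ⟨Finset.mem_univ _, hc⟩⟩
  have hcC : Fintype.card
      ((Fin n → Fin n → Bool) × (Fin n → Fin n → Bool) × (Fin n → Fin n → Bool))
      = 2^(3*n^2) := by
    simp only [Fintype.card_prod, Fintype.card_fun, Fintype.card_bool, Fintype.card_fin]
    rw [← pow_mul, ← pow_add, ← pow_add]
    congr 1
    ring
  have hBadcard : (Bad.card : ℝ) < 2^(n^3) := by
    have h1 : Bad.card ≤ Fintype.card
        ((Fin n → Fin n → Bool) × (Fin n → Fin n → Bool) × (Fin n → Fin n → Bool)) * K := by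
      refine (Finset.card_le_card hsub).trans (Finset.card_biUnion_le.trans ?_)
      rw [Finset.sum_congr rfl fun c _ => hslice c, Finset.sum_const, Finset.card_univ,
        smul_eq_mul]
    calc (Bad.card : ℝ)
        ≤ ((2^(3*n^2) * K : ℕ) : ℝ) := by exact_mod_cast hcC ▸ h1
      _ = 2^(3*n^2) * (K:ℝ) := by push_cast; ring
      _ < 2^(3*n^2) * (2^(n^3)/2^(3*n^2)) :=
          mul_lt_mul_of_pos_left hKlt (by positivity)
      _ = 2^(n^3) := by field_simp
  have hBadne : Bad ≠ Finset.univ := by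
    intro h
    have h2 : ((Finset.univ : Finset (Fin n × Fin n × Fin n → Bool)).card : ℝ) < 2^(n^3) :=
      h ▸ hBadcard
    rw [Finset.card_univ, Fintype.card_fun, Fintype.card_bool, hcardι] at h2
    push_cast at h2
    exact lt_irrefl _ h2
  obtain ⟨b, -, hbgood⟩ := Finset.exists_of_ssubset (Finset.ssubset_univ_iff.mpr hBadne)
  have hgood : ∀ c : (Fin n → Fin n → Bool) × (Fin n → Fin n → Bool) × (Fin n → Fin n → Bool),
      ((Tsum n b c : ℤ) : ℝ) ≤ t := by
    intro c
    by_contra hcon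
    push_neg at hcon
    exact hbgood (by rw [hBad]; exact Finset.mem_filter.mpr ⟨Finset.mem_univ _, ⟨c, hcon⟩⟩)
  refine ⟨fun i j k => sg (b (i, j, k)), fun i j k => sg_one_or _, ?_⟩
  intro L₁ L₂ L₃ h1 h2 h3
  set c : (Fin n → Fin n → Bool) × (Fin n → Fin n → Bool) × (Fin n → Fin n → Bool) :=
    (fun i j => decide (L₁ i j = 1), fun i k => decide (L₂ i k = 1),
      fun j k => decide (L₃ j k = 1)) with hc
  have e1 : ∀ i j, sg (decide (L₁ i j = 1)) = L₁ i j := by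
    intro i j; rcases h1 i j with h | h <;> norm_num [h, sg]
  have e2 : ∀ i k, sg (decide (L₂ i k = 1)) = L₂ i k := by
    intro i k; rcases h2 i k with h | h <;> norm_num [h, sg]
  have e3 : ∀ j k, sg (decide (L₃ j k = 1)) = L₃ j k := by
    intro j k; rcases h3 j k with h | h <;> norm_num [h, sg]
  have hTs : Tsum n b c = ∑ i, ∑ j, ∑ k, sg (b (i, j, k)) * L₁ i j * L₂ i k * L₃ j k := by
    rw [Tsum, Fintype.sum_prod_type]
    refine Finset.sum_congr rfl fun i _ => ?_
    rw [Fintype.sum_prod_type]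
    refine Finset.sum_congr rfl fun j _ => Finset.sum_congr rfl fun k _ => ?_
    rw [hc]
    dsimp only
    rw [e1, e2, e3]
  show ((∑ i, ∑ j, ∑ k, sg (b (i, j, k)) * L₁ i j * L₂ i k * L₃ j k : ℤ) : ℝ) ≤ t
  rw [← hTs]
  exact hgood c

/-- The cubic board `{1,…,n}³` with `3n²` line switches: upper bound
`(6 ln 2)^(1/2) n^(5/2)` for some `±1` assignment, and lower bound
`c·n^(5/2)` (absolute `c > 0`) for every `±1` assignment; hence the maximum
discrepancy is `Θ(n^(5/2))`. -/
theorem stmt_19 :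
    (∀ n : ℕ, ∃ a : Fin n → Fin n → Fin n → ℤ,
      (∀ i j k, a i j k = 1 ∨ a i j k = -1) ∧
      ∀ L₁ L₂ L₃ : Fin n → Fin n → ℤ,
        (∀ i j, L₁ i j = 1 ∨ L₁ i j = -1) →
        (∀ i k, L₂ i k = 1 ∨ L₂ i k = -1) →
        (∀ j k, L₃ j k = 1 ∨ L₃ j k = -1) →
        ((∑ i, ∑ j, ∑ k, a i j k * L₁ i j * L₂ i k * L₃ j k : ℤ) : ℝ)
          ≤ Real.sqrt (6 * Real.log 2) * (n : ℝ) ^ ((5 : ℝ)/2)) ∧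
    (∃ c : ℝ, 0 < c ∧ ∀ n : ℕ, ∀ a : Fin n → Fin n → Fin n → ℤ,
      (∀ i j k, a i j k = 1 ∨ a i j k = -1) →
      ∃ L₁ L₂ L₃ : Fin n → Fin n → ℤ,
        (∀ i j, L₁ i j = 1 ∨ L₁ i j = -1) ∧
        (∀ i k, L₂ i k = 1 ∨ L₂ i k = -1) ∧
        (∀ j k, L₃ j k = 1 ∨ L₃ j k = -1) ∧
        c * (n : ℝ) ^ ((5 : ℝ)/2)
          ≤ ((∑ i, ∑ j, ∑ k, a i j k * L₁ i j * L₂ i k * L₃ j k : ℤ) : ℝ)) := by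
  constructor
  · exact upperA
  · exact ⟨(Real.sqrt 3)⁻¹, inv_pos.mpr (Real.sqrt_pos.mpr (by norm_num)),
      fun n a ha => lowerB n a ha⟩
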